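/- arXiv:2401.14632 — 2 statements merged into one kernel-verified Lean document; each statement's English description precedes it below -/
import Mathlib

section
/- Let d ≥ 1 and n ≥ 1, and let f = Σ_μ c_μ s_μ be a real linear combination of Schur polynomials in x_1, …, x_n, where μ ranges over partitions of d. Suppose λ is a partition of d with ℓ(λ) ≤ n such that c_λ ≠ 0 and c_μ ≠ 0 only if μ ⊴ λ. Then Newton(f) = P_λ. Moreover, if c_μ ≥ 0 for all μ, then f has saturated Newton polytope. -/
/-- A partition, encoded as a weakly decreasing, eventually zero sequence of
nonnegative integers (0-indexed: part `i+1` of the partition is `l i`). -/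
def IsPartition (l : ℕ → ℕ) : Prop :=
  Antitone l ∧ ∃ N, ∀ m, N ≤ m → l m = 0

/-- `l` is a partition of `d`: weakly decreasing, eventually zero, parts summing to `d`. -/
def IsPartitionOf (d : ℕ) (l : ℕ → ℕ) : Prop :=
  Antitone l ∧ ∃ N, (∀ m, N ≤ m → l m = 0) ∧ ∑ i ∈ Finset.range N, l i = d

/-- Dominance order: `Dominates lam mu` means `mu ⊴ lam`, i.e. every partial sum of `mu`
is at most the corresponding partial sum of `lam`. -/
def Dominates (lam mu : ℕ → ℕ) : Prop :=
  ∀ i, ∑ t ∈ Finset.range i, mu t ≤ ∑ t ∈ Finset.range i, lam t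

/-- The cell in row `i`, column `j` (0-indexed) belongs to the Young diagram of `l`
iff `j < l i`.  The hook length of such a cell: 1 + #cells strictly to its right in its
row + #cells strictly above it in its column; for `j < l i` this equals
`(l i - j) + #{i' > i | j < l i'}`. -/
noncomputable def hook (l : ℕ → ℕ) (i j : ℕ) : ℕ :=
  (l i - j) + Nat.card {i' : ℕ // i < i' ∧ j < l i'}

/-- `l` is a `(k+1)`-core: a partition none of whose cells has hook length `k+1`. -/
def IsCore (k : ℕ) (l : ℕ → ℕ) : Prop :=
  IsPartition l ∧ ∀ i j, j < l i → hook l i j ≠ k + 1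

/-- The `(k+1)`-residue of the cell in row `i`, column `j`: `(j - i) mod (k+1)`. -/
def residue (k i j : ℕ) : ZMod (k + 1) :=
  (j : ZMod (k + 1)) - (i : ZMod (k + 1))

/-- `(i,j)` is a top cell of `l`: it lies in the diagram but the cell above it does not. -/
def IsTopCell (l : ℕ → ℕ) (i j : ℕ) : Prop :=
  j < l i ∧ l (i + 1) ≤ j

/-- `(i,j)` is a removable corner of `l`: a cell with no cell above it nor to its right. -/
def IsRemovableCorner (l : ℕ → ℕ) (i j : ℕ) : Prop :=
  j + 1 = l i ∧ l (i + 1) ≤ j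

/-- For top cells `c' = (i',j')` and `c = (i,j)` with `c` weakly southeast of `c'`,
`hBetween l i' j' i j` is `#{x | i ≤ x ≤ i', (x,j') ∈ l} + #{y | j'+1 ≤ y ≤ j, (i,y) ∈ l}`. -/
def hBetween (l : ℕ → ℕ) (i' j' i j : ℕ) : ℕ :=
  ((Finset.Icc i i').filter (fun x => j' < l x)).card +
    ((Finset.Icc (j' + 1) j).filter (fun y => y < l i)).card

/-- `pMap k l i` is the number of cells in row `i` of `l` with hook length at most `k`;
the sequence `pMap k l` is `p(l)`. -/
noncomputable def pMap (k : ℕ) (l : ℕ → ℕ) (i : ℕ) : ℕ :=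
  ((Finset.range (l i)).filter (fun j => hook l i j ≤ k)).card

/-- A semistandard Young tableau of shape `l`, with 0-indexed entries (entry `m`
represents the letter `m+1`): rows weakly increase, columns strictly increase,
and (as a normalization) entries outside the diagram are `0`. -/
structure SSYT (l : ℕ → ℕ) where
  entry : ℕ → ℕ → ℕ
  rowWeak : ∀ i j, j + 1 < l i → entry i j ≤ entry i (j + 1)
  colStrict : ∀ i j, j < l (i + 1) → entry i j < entry (i + 1) j
  zero_outside : ∀ i j, l i ≤ j → entry i j = 0

/-- The weight of an SSYT: `T.weight m` is the number of cells of the diagram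
whose entry is `m`. -/
noncomputable def SSYT.weight {l : ℕ → ℕ} (T : SSYT l) (m : ℕ) : ℕ :=
  Nat.card {p : ℕ × ℕ // p.2 < l p.1 ∧ T.entry p.1 p.2 = m}

/-- The `k`-weight of an SSYT: `T.kweight k m` is the number of distinct
`(k+1)`-residues among the cells whose entry is `m`. -/
noncomputable def SSYT.kweight {l : ℕ → ℕ} (T : SSYT l) (k m : ℕ) : ℕ :=
  Nat.card {r : ZMod (k + 1) // ∃ i j, j < l i ∧ T.entry i j = m ∧ residue k i j = r}

/-- The coefficient of the monomial with exponent vector `α` in `f`. -/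
noncomputable def coeffOf {n : ℕ} (f : MvPolynomial (Fin n) ℝ) (α : Fin n → ℕ) : ℝ :=
  f.coeff (Finsupp.equivFunOnFinite.symm α)

/-- `f` is the Schur polynomial of shape `l` in `x_1, …, x_n`: the coefficient of `x^α`
is the number of SSYT of shape `l` with entries among the `n` letters whose weight is `α`. -/
def IsSchurPoly (n : ℕ) (l : ℕ → ℕ) (f : MvPolynomial (Fin n) ℝ) : Prop :=
  ∀ α : Fin n → ℕ,
    coeffOf f α =
      (Nat.card {T : SSYT l // (∀ i j, j < l i → T.entry i j < n) ∧
        ∀ m : Fin n, T.weight (m : ℕ) = α m} : ℝ)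

/-- `f` is the dual `k`-Schur polynomial of shape the `(k+1)`-core `l` in `x_1, …, x_n`:
the coefficient of `x^α` is the number of SSYT of shape `l` with entries among the `n`
letters whose `k`-weight is `α`. -/
def IsDualKSchurPoly (n k : ℕ) (l : ℕ → ℕ) (f : MvPolynomial (Fin n) ℝ) : Prop :=
  ∀ α : Fin n → ℕ,
    coeffOf f α =
      (Nat.card {T : SSYT l // (∀ i j, j < l i → T.entry i j < n) ∧
        ∀ m : Fin n, T.kweight k (m : ℕ) = α m} : ℝ)

/-- The Newton polytope of `f`: the convex hull in `ℝ^n` of the exponent vectors of the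
monomials of `f` with nonzero coefficient. -/
noncomputable def newtonPolytope {n : ℕ} (f : MvPolynomial (Fin n) ℝ) : Set (Fin n → ℝ) :=
  convexHull ℝ {x | ∃ α : Fin n → ℕ, coeffOf f α ≠ 0 ∧ x = fun i => (α i : ℝ)}

/-- `f` has saturated Newton polytope: the lattice points of `Newton(f)` are exactly
the exponent vectors of `f`. -/
def HasSNP {n : ℕ} (f : MvPolynomial (Fin n) ℝ) : Prop :=
  ∀ x : Fin n → ℝ,
    (x ∈ newtonPolytope f ∧ ∀ i, ∃ m : ℤ, x i = (m : ℝ)) ↔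
      ∃ α : Fin n → ℕ, coeffOf f α ≠ 0 ∧ x = fun i => (α i : ℝ)

/-- The `λ`-permutahedron in `ℝ^n`: the convex hull of all coordinate permutations of
`(l 0, …, l (n-1))`. -/
noncomputable def permutahedron (n : ℕ) (l : ℕ → ℕ) : Set (Fin n → ℝ) :=
  convexHull ℝ {v : Fin n → ℝ | ∃ σ : Equiv.Perm (Fin n), ∀ i, v i = (l (σ i).val : ℝ)}

/-- A subset `J ⊆ ℕ^n` is M-convex. -/
def MConvex {n : ℕ} (J : Set (Fin n → ℕ)) : Prop :=
  ∀ α ∈ J, ∀ β ∈ J, ∀ i : Fin n, β i < α i →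
    ∃ j : Fin n, α j < β j ∧
      (fun t => if t = i then α t - 1 else if t = j then α t + 1 else α t) ∈ J

/-- `sort(α) ⊴ lam`: some weakly decreasing rearrangement of `α` (padded with zeros)
is dominated by `lam`. -/
def SortDominatedBy (n : ℕ) (α : Fin n → ℕ) (lam : ℕ → ℕ) : Prop :=
  ∃ β : ℕ → ℕ, Antitone β ∧ (∀ m, n ≤ m → β m = 0) ∧
    (∃ σ : Equiv.Perm (Fin n), ∀ i : Fin n, β i = α (σ i)) ∧
    Dominates lam β

section NewtonSchurAux
open Finset


lemma ssyt_ext {l : ℕ → ℕ} (T U : SSYT l) (h : T.entry = U.entry) : T = U := by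
  cases T; cases U; simp_all

lemma sum_range_stable {μ : ℕ → ℕ} {N K : ℕ} (h : ∀ m, N ≤ m → μ m = 0) (hK : N ≤ K) :
    ∑ t ∈ range K, μ t = ∑ t ∈ range N, μ t := by
  have : range N ⊆ range K := range_subset_range.2 hK
  rw [← Finset.sum_subset this]
  intro x hx hnx
  exact h x (by simpa using hnx)

/-- strict increase along a column -/
lemma col_chain {μ : ℕ → ℕ} (hanti : Antitone μ) (T : SSYT μ) {i i' j : ℕ}
    (hii : i < i') (hj : j < μ i') : T.entry i j < T.entry i' j := by
  induction i' with
  | zero => omega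
  | succ k ih =>
    rcases Nat.lt_succ_iff_lt_or_eq.mp hii with h | h
    · exact lt_trans (ih h (lt_of_lt_of_le hj (hanti (Nat.le_succ k)))) (T.colStrict k j hj)
    · subst h; exact T.colStrict i j hj

lemma row_le_entry {μ : ℕ → ℕ} (hanti : Antitone μ) (T : SSYT μ) {i j : ℕ}
    (hj : j < μ i) : i ≤ T.entry i j := by
  rcases Nat.eq_zero_or_pos i with h | h
  · omega
  · have := col_chain hanti T (i := 0) (i' := i) h hj
    -- entry 0 j < entry i j only gives ≥ 1; do induction instead
    clear this
    induction i with
    | zero => omega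
    | succ k ih =>
      have hk : j < μ k := lt_of_lt_of_le hj (hanti (Nat.le_succ k))
      have h1 := T.colStrict k j hj
      rcases Nat.eq_zero_or_pos k with h0 | hpos
      · subst h0; omega
      · have := ih hk hpos; omega

/-- if all entries < n then rows ≥ n are empty -/
lemma rows_le_of_entries_lt {μ : ℕ → ℕ} (hanti : Antitone μ) (T : SSYT μ) {n : ℕ}
    (hT : ∀ i j, j < μ i → T.entry i j < n) : ∀ t, n ≤ t → μ t = 0 := by
  intro t ht
  by_contra h
  have h0 : 0 < μ t := Nat.pos_of_ne_zero h
  have := row_le_entry hanti T h0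
  have := hT t 0 h0
  omega

/-- Nat.card of a cell subtype as a Finset card -/
lemma natCard_cells {μ : ℕ → ℕ} (hanti : Antitone μ) {N : ℕ} (hN : ∀ m, N ≤ m → μ m = 0)
    (Q : ℕ × ℕ → Prop) [DecidablePred Q] :
    Nat.card {p : ℕ × ℕ // p.2 < μ p.1 ∧ Q p} =
      (((range N ×ˢ range (μ 0 + 1)).filter (fun p => p.2 < μ p.1)).filter Q).card := by
  have hset : {p : ℕ × ℕ | p.2 < μ p.1 ∧ Q p} =
      ↑(((range N ×ˢ range (μ 0 + 1)).filter (fun p => p.2 < μ p.1)).filter Q) := by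
    ext p
    simp only [Set.mem_setOf_eq, coe_filter, mem_product, mem_range, Set.mem_setOf_eq,
      mem_filter]
    constructor
    · rintro ⟨h1, h2⟩
      have hp1 : p.1 < N := by
        by_contra hc
        have := hN p.1 (by omega)
        omega
      have hp2 : p.2 < μ 0 + 1 := by
        have := hanti (Nat.zero_le p.1)
        omega
      exact ⟨⟨⟨hp1, hp2⟩, h1⟩, h2⟩
    · rintro ⟨⟨_, h1⟩, h2⟩; exact ⟨h1, h2⟩
  calc Nat.card {p : ℕ × ℕ // p.2 < μ p.1 ∧ Q p}
      = Nat.card {p : ℕ × ℕ | p.2 < μ p.1 ∧ Q p} := rfl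
    _ = _ := by rw [Nat.card_coe_set_eq, hset, Set.ncard_coe_finset]


def boxF (μ : ℕ → ℕ) (K M : ℕ) : Finset (ℕ × ℕ) :=
  (range K ×ˢ range M).filter (fun p => p.2 < μ p.1)

lemma boxF_card {μ : ℕ → ℕ} (hanti : Antitone μ) (K M : ℕ) (hM : μ 0 < M) :
    (boxF μ K M).card = ∑ i ∈ range K, μ i := by
  classical
  have hb : boxF μ K M = (range K).biUnion (fun i => (range (μ i)).image (fun j => (i, j))) := by
    ext p
    obtain ⟨a, b⟩ := p
    simp only [boxF, mem_filter, mem_product, mem_range, mem_biUnion, mem_image]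
    constructor
    · rintro ⟨⟨ha, hb⟩, hba⟩
      exact ⟨a, ha, b, hba, rfl⟩
    · rintro ⟨i, hi, j, hj, hij⟩
      cases hij
      have := hanti (Nat.zero_le a)
      exact ⟨⟨hi, by omega⟩, hj⟩
  rw [hb, card_biUnion]
  · refine Finset.sum_congr rfl fun i _ => ?_
    rw [Finset.card_image_of_injective _ (fun x y h => congrArg Prod.snd h), card_range]
  · intro x _ y _ hxy
    simp only [Finset.disjoint_left, mem_image, mem_range]
    rintro a ⟨j, _, rfl⟩ ⟨j', _, h⟩
    exact hxy (congrArg Prod.fst h).symm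

lemma cells_entry_mem_le {μ : ℕ → ℕ} (hanti : Antitone μ) (T : SSYT μ)
    (K M : ℕ) (hM : μ 0 < M) (W : Finset ℕ) :
    ((boxF μ K M).filter (fun p => T.entry p.1 p.2 ∈ W)).card ≤ ∑ t ∈ range W.card, μ t := by
  classical
  set D := (boxF μ K M).filter (fun p => T.entry p.1 p.2 ∈ W) with hD
  have hsub : ∀ p ∈ D, p.2 < μ p.1 ∧ T.entry p.1 p.2 ∈ W := by
    intro p hp
    simp only [hD, boxF, mem_filter, mem_product] at hp
    exact ⟨hp.1.2, hp.2⟩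
  have key : ∀ p ∈ D, ∀ p' ∈ D, p.2 = p'.2 → p.1 < p'.1 →
      T.entry p.1 p.2 < T.entry p'.1 p'.2 := by
    intro p hp p' hp' hc hl
    have h1 := col_chain hanti T hl (hsub p' hp').1
    have h2 : T.entry p.1 p.2 = T.entry p.1 p'.2 := by rw [hc]
    omega
  -- rank of a cell within its column
  have hrank_lt : ∀ p ∈ D, (D.filter (fun p' => p'.2 = p.2 ∧ p'.1 < p.1)).card < W.card := by
    intro p hp
    have hnotmem : p ∉ D.filter (fun p' => p'.2 = p.2 ∧ p'.1 < p.1) := by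
      simp [mem_filter]
    have hins : (insert p (D.filter (fun p' => p'.2 = p.2 ∧ p'.1 < p.1))).card ≤ W.card := by
      apply Finset.card_le_card_of_injOn (fun p' => T.entry p'.1 p'.2)
      · intro q hq
        rw [mem_coe, mem_insert] at hq
        rcases hq with rfl | hq
        · exact (hsub q hp).2
        · exact (hsub q (mem_filter.1 hq).1).2
      · intro q hq q' hq' hE
        simp only [coe_insert, Set.mem_insert_iff, mem_coe, mem_filter] at hq hq'
        have hqD : q ∈ D := by rcases hq with rfl | ⟨h, _⟩; exacts [hp, h]
        have hq'D : q' ∈ D := by rcases hq' with rfl | ⟨h, _⟩; exacts [hp, h]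
        have hcol : q.2 = q'.2 := by
          rcases hq with rfl | ⟨_, h, _⟩ <;> rcases hq' with rfl | ⟨_, h', _⟩ <;>
            simp_all
        have hE' : T.entry q.1 q.2 = T.entry q'.1 q'.2 := hE
        rcases lt_trichotomy q.1 q'.1 with h | h | h
        · exact absurd hE' (by have := key q hqD q' hq'D hcol h; omega)
        · exact Prod.ext h hcol
        · exact absurd hE' (by have := key q' hq'D q hqD hcol.symm h; omega)
    rw [Finset.card_insert_of_notMem hnotmem] at hins
    omega
  have hrank_le : ∀ p ∈ D, (D.filter (fun p' => p'.2 = p.2 ∧ p'.1 < p.1)).card ≤ p.1 := by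
    intro p hp
    have : (D.filter (fun p' => p'.2 = p.2 ∧ p'.1 < p.1)).card ≤ (range p.1).card := by
      apply Finset.card_le_card_of_injOn (fun p' => p'.1)
      · intro q hq; simp only [mem_coe, mem_filter] at hq; simpa using hq.2.2
      · intro q hq q' hq' h
        simp only [mem_coe, mem_filter] at hq hq'
        exact Prod.ext h (hq.2.1.trans hq'.2.1.symm)
    simpa using this
  have hinj : D.card ≤ (boxF μ W.card M).card := by
    apply Finset.card_le_card_of_injOn
      (fun p => ((D.filter (fun p' => p'.2 = p.2 ∧ p'.1 < p.1)).card, p.2))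
    · intro p hp
      simp only [boxF, mem_coe, mem_filter, mem_product, mem_range]
      have h1 := hrank_lt p hp
      have h2 := hrank_le p hp
      have h3 := (hsub p hp).1
      have h4 : p.2 < M := by have := hanti (Nat.zero_le p.1); omega
      exact ⟨⟨h1, h4⟩, lt_of_lt_of_le h3 (hanti h2)⟩
    · intro p hp p' hp' h
      simp only [mem_coe] at hp hp'
      have h' : ((D.filter (fun q => q.2 = p.2 ∧ q.1 < p.1)).card, p.2)
          = ((D.filter (fun q => q.2 = p'.2 ∧ q.1 < p'.1)).card, p'.2) := h
      injection h' with hrkeq hcol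
      rcases lt_trichotomy p.1 p'.1 with hlt | heq | hlt
      · exfalso
        have hss : insert p (D.filter (fun q => q.2 = p.2 ∧ q.1 < p.1)) ⊆
            D.filter (fun q => q.2 = p'.2 ∧ q.1 < p'.1) := by
          intro q hq
          rw [mem_insert] at hq
          rw [mem_filter]
          rcases hq with rfl | hq
          · exact ⟨hp, hcol, hlt⟩
          · rw [mem_filter] at hq
            exact ⟨hq.1, hq.2.1.trans hcol, by omega⟩
        have := Finset.card_le_card hss
        rw [Finset.card_insert_of_notMem (by simp [mem_filter])] at this
        omega
      · exact Prod.ext heq hcol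
      · exfalso
        have hss : insert p' (D.filter (fun q => q.2 = p'.2 ∧ q.1 < p'.1)) ⊆
            D.filter (fun q => q.2 = p.2 ∧ q.1 < p.1) := by
          intro q hq
          rw [mem_insert] at hq
          rw [mem_filter]
          rcases hq with rfl | hq
          · exact ⟨hp', hcol.symm, hlt⟩
          · rw [mem_filter] at hq
            exact ⟨hq.1, hq.2.1.trans hcol.symm, by omega⟩
        have := Finset.card_le_card hss
        rw [Finset.card_insert_of_notMem (by simp [mem_filter])] at this
        omega
  calc D.card ≤ (boxF μ W.card M).card := hinj
    _ = ∑ t ∈ range W.card, μ t := boxF_card hanti _ _ hM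


lemma weight_eq {μ : ℕ → ℕ} (hanti : Antitone μ) {N : ℕ} (hN : ∀ m, N ≤ m → μ m = 0)
    (T : SSYT μ) (m : ℕ) :
    T.weight m = ((boxF μ N (μ 0 + 1)).filter (fun p => T.entry p.1 p.2 = m)).card := by
  classical
  exact natCard_cells hanti hN (fun p => T.entry p.1 p.2 = m)

lemma sum_weight_mem {μ : ℕ → ℕ} (hanti : Antitone μ) {N : ℕ} (hN : ∀ m, N ≤ m → μ m = 0)
    (T : SSYT μ) (V : Finset ℕ) :
    ∑ m ∈ V, T.weight m =
      ((boxF μ N (μ 0 + 1)).filter (fun p => T.entry p.1 p.2 ∈ V)).card := by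
  classical
  have hfib := Finset.card_eq_sum_card_fiberwise (f := fun p : ℕ × ℕ => T.entry p.1 p.2)
    (s := (boxF μ N (μ 0 + 1)).filter (fun p => T.entry p.1 p.2 ∈ V)) (t := V)
    (fun p hp => (mem_filter.1 hp).2)
  rw [hfib]
  refine Finset.sum_congr rfl fun m hm => ?_
  rw [weight_eq hanti hN T m]
  congr 1
  ext p
  simp only [mem_filter, and_assoc]
  exact ⟨fun h => ⟨h.1, h.2 ▸ hm, h.2⟩, fun h => ⟨h.1, h.2.2⟩⟩

/-- main packaged A1 bound -/
lemma weight_subdom {n : ℕ} {μ : ℕ → ℕ} (hanti : Antitone μ) {N : ℕ}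
    (hN : ∀ m, N ≤ m → μ m = 0) (T : SSYT μ) (V : Finset (Fin n)) :
    ∑ m ∈ V, T.weight m.val ≤ ∑ t ∈ range V.card, μ t := by
  classical
  have hval : ∑ m ∈ V, T.weight m.val = ∑ m' ∈ V.image Fin.val, T.weight m' := by
    rw [Finset.sum_image (by intro x _ y _ h; exact Fin.ext h)]
  rw [hval, sum_weight_mem hanti hN T]
  have := cells_entry_mem_le hanti T N (μ 0 + 1) (by omega) (V.image Fin.val)
  rwa [Finset.card_image_of_injective _ Fin.val_injective] at this

lemma weight_total {n : ℕ} {μ : ℕ → ℕ} (hanti : Antitone μ) {N : ℕ}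
    (hN : ∀ m, N ≤ m → μ m = 0) (T : SSYT μ)
    (hTn : ∀ i j, j < μ i → T.entry i j < n) :
    ∑ m : Fin n, T.weight m.val = ∑ t ∈ range N, μ t := by
  classical
  rw [Fin.sum_univ_eq_sum_range (fun m => T.weight m) n]
  rw [sum_weight_mem hanti hN T (range n)]
  rw [Finset.filter_true_of_mem]
  · exact boxF_card hanti N _ (by omega)
  · intro p hp
    simp only [boxF, mem_filter, mem_product, mem_range] at hp ⊢
    exact hTn p.1 p.2 hp.2


lemma finite_ssyt_subtype {n : ℕ} (hn : 0 < n) {μ : ℕ → ℕ} (hanti : Antitone μ) {N : ℕ}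
    (hN : ∀ m, N ≤ m → μ m = 0) (P : SSYT μ → Prop)
    (hP : ∀ T, P T → ∀ i j, j < μ i → T.entry i j < n) :
    Finite {T : SSYT μ // P T} := by
  have hlt : ∀ (T : {T : SSYT μ // P T}) (i j : ℕ), T.val.entry i j < n := by
    intro T i j
    by_cases hc : j < μ i
    · exact hP T.val T.property i j hc
    · rw [T.val.zero_outside i j (by omega)]; exact hn
  apply Finite.of_injective
    (fun T : {T : SSYT μ // P T} =>
      fun p : Fin N × Fin (μ 0 + 1) => (⟨T.val.entry p.1.val p.2.val, hlt T _ _⟩ : Fin n))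
  intro T U h
  apply Subtype.ext
  apply ssyt_ext
  funext i j
  by_cases hi : i < N
  · by_cases hj : j < μ 0 + 1
    · have := congrFun h (⟨i, hi⟩, ⟨j, hj⟩)
      exact congrArg Fin.val this
    · rw [T.val.zero_outside i j (by have := hanti (Nat.zero_le i); omega),
        U.val.zero_outside i j (by have := hanti (Nat.zero_le i); omega)]
  · rw [T.val.zero_outside i j (by rw [hN i (by omega)]; omega),
      U.val.zero_outside i j (by rw [hN i (by omega)]; omega)]

lemma ssyt_card_ne_zero {n : ℕ} (hn : 0 < n) {μ : ℕ → ℕ} (hanti : Antitone μ) {N : ℕ}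
    (hN : ∀ m, N ≤ m → μ m = 0) (P : SSYT μ → Prop)
    (hP : ∀ T, P T → ∀ i j, j < μ i → T.entry i j < n)
    (T₀ : SSYT μ) (h₀ : P T₀) : Nat.card {T : SSYT μ // P T} ≠ 0 := by
  haveI := finite_ssyt_subtype hn hanti hN P hP
  exact Nat.card_ne_zero.2 ⟨⟨⟨T₀, h₀⟩⟩, inferInstance⟩


lemma exists_ssyt (n : ℕ) : ∀ (μ : ℕ → ℕ), Antitone μ → (∀ m, n ≤ m → μ m = 0) →
    ∀ α : Fin n → ℕ,
    (∀ V : Finset (Fin n), ∑ i ∈ V, α i ≤ ∑ t ∈ Finset.range V.card, μ t) →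
    ∑ i, α i = ∑ t ∈ Finset.range n, μ t →
    ∃ T : SSYT μ, (∀ i j, j < μ i → T.entry i j < n) ∧ ∀ m : Fin n, T.weight m.val = α m := by
  classical
  induction n with
  | zero =>
    intro μ hanti hμ0 α hbd htot
    have hz : ∀ i, μ i = 0 := fun i => hμ0 i (Nat.zero_le i)
    refine ⟨⟨fun _ _ => 0, ?_, ?_, ?_⟩, ?_, ?_⟩
    · intro i j h; exact absurd h (by simp [hz])
    · intro i j h; exact absurd h (by simp [hz])
    · intro i j _; rfl
    · intro i j h; exact absurd h (by simp [hz])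
    · exact fun m => m.elim0
  | succ n IH =>
    intro μ hanti hμ0 α hbd htot
    set a := α (Fin.last n) with ha
    -- basic bounds on a
    have ha_top : a ≤ μ 0 := by
      have := hbd {Fin.last n}
      simpa using this
    have ha_bot : μ n ≤ a := by
      have h1 := hbd (Finset.univ.erase (Fin.last n))
      have h2 : ∑ i ∈ Finset.univ.erase (Fin.last n), α i + a = ∑ i, α i :=
        Finset.sum_erase_add _ _ (mem_univ _)
      have h3 : (Finset.univ.erase (Fin.last n)).card = n := by
        simp
      rw [h3] at h1
      rw [htot] at h2
      rw [Finset.sum_range_succ] at h2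
      omega
    -- the intermediate shape
    set ν : ℕ → ℕ := fun i => max (μ (i+1)) (μ i - (a - μ (i+1))) with hνdef
    have hstrip : ∀ i, μ (i+1) ≤ ν i ∧ ν i ≤ μ i := by
      intro i
      have h1 : μ (i+1) ≤ μ i := hanti (Nat.le_succ i)
      simp only [hνdef]
      omega
    have hνanti : Antitone ν := by
      apply antitone_nat_of_succ_le
      intro i
      have h1 : μ (i+1+1) ≤ μ (i+1) := hanti (by omega)
      have h2 : μ (i+1) ≤ μ i := hanti (by omega)
      simp only [hνdef]
      omega
    have hν0 : ∀ m, n ≤ m → ν m = 0 := by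
      intro m hm
      have h1 : μ (m+1) = 0 := hμ0 (m+1) (by omega)
      rcases Nat.eq_or_lt_of_le hm with h | h
      · subst h
        simp only [hνdef]
        omega
      · have h2 : μ m = 0 := hμ0 m (by omega)
        simp only [hνdef, h1, h2]
        omega
    have hk : ∀ k, ∑ t ∈ Finset.range k, ν t + a = ∑ t ∈ Finset.range k, μ t + min a (μ k) := by
      intro k
      induction k with
      | zero => simp; omega
      | succ k ihk =>
        rw [Finset.sum_range_succ, Finset.sum_range_succ]
        have h1 : μ (k+1) ≤ μ k := hanti (by omega)
        have h2 : ν k = max (μ (k+1)) (μ k - (a - μ (k+1))) := rfl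
        omega
    have hμtot : ∑ t ∈ Finset.range (n+1), μ t = ∑ t ∈ Finset.range n, ν t + a := by
      have := hk n
      rw [Finset.sum_range_succ]
      omega
    set α' : Fin n → ℕ := fun i => α i.castSucc with hα'
    have htot' : ∑ i, α' i = ∑ t ∈ Finset.range n, ν t := by
      have h1 : ∑ i, α i = ∑ i, α' i + a := Fin.sum_univ_castSucc α
      omega
    have hbd' : ∀ V : Finset (Fin n), ∑ i ∈ V, α' i ≤ ∑ t ∈ Finset.range V.card, ν t := by
      intro V
      set k := V.card with hkdef
      have hW : ∑ i ∈ V.image Fin.castSucc, α i = ∑ i ∈ V, α' i := by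
        rw [Finset.sum_image (by intro x _ y _ h; exact Fin.castSucc_injective n h)]
      have hWcard : (V.image Fin.castSucc).card = k :=
        Finset.card_image_of_injective _ (Fin.castSucc_injective n)
      have hkν := hk k
      by_cases hc : a ≤ μ k
      · have := hbd (V.image Fin.castSucc)
        rw [hWcard, hW] at this
        omega
      · have hlast : Fin.last n ∉ V.image Fin.castSucc := by
          simp only [mem_image]
          rintro ⟨x, _, hx⟩
          exact absurd (congrArg Fin.val hx) (by simp [Fin.ext_iff]; omega)
        have := hbd (insert (Fin.last n) (V.image Fin.castSucc))
        rw [Finset.sum_insert hlast, Finset.card_insert_of_notMem hlast, hWcard, hW] at this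
        rw [Finset.sum_range_succ] at this
        omega
    obtain ⟨T', hT'n, hT'w⟩ := IH ν hνanti hν0 α' hbd' htot'
    -- build the new tableau
    set E : ℕ → ℕ → ℕ := fun i j => if j < ν i then T'.entry i j else if j < μ i then n else 0
      with hE
    have hrw : ∀ i j, j + 1 < μ i → E i j ≤ E i (j+1) := by
      intro i j h
      simp only [hE]
      by_cases h1 : j + 1 < ν i
      · rw [if_pos (by omega), if_pos h1]
        exact T'.rowWeak i j h1
      · by_cases h2 : j < ν i
        · rw [if_pos h2, if_neg h1, if_pos h]
          exact le_of_lt (hT'n i j h2)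
        · rw [if_neg h2, if_neg h1, if_pos (by omega), if_pos h]
    have hcs : ∀ i j, j < μ (i+1) → E i j < E (i+1) j := by
      intro i j h
      simp only [hE]
      by_cases h1 : j < ν (i+1)
      · rw [if_pos h1, if_pos (by have : ν (i+1) ≤ ν i := hνanti (by omega); omega)]
        exact T'.colStrict i j h1
      · rw [if_neg h1, if_pos h, if_pos (by have := (hstrip i).1; omega)]
        exact hT'n i j (by have := (hstrip i).1; omega)
    have hzo : ∀ i j, μ i ≤ j → E i j = 0 := by
      intro i j h
      simp only [hE]
      rw [if_neg (by have := (hstrip i).2; omega), if_neg (by omega)]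
    refine ⟨⟨E, hrw, hcs, hzo⟩, ?_, ?_⟩
    · intro i j hj
      simp only [hE]
      by_cases h1 : j < ν i
      · rw [if_pos h1]; exact lt_trans (hT'n i j h1) (by omega)
      · rw [if_neg h1, if_pos hj]; omega
    · intro m
      by_cases hm : m.val = n
      · -- the new letter: weight = a
        have hseteq : ∀ p : ℕ × ℕ,
            (p.2 < μ p.1 ∧ E p.1 p.2 = m.val) ↔ (p.2 < μ p.1 ∧ ν p.1 ≤ p.2) := by
          intro p
          simp only [hE, hm]
          constructor
          · rintro ⟨h1, h2⟩
            refine ⟨h1, ?_⟩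
            by_contra hc
            rw [if_pos (by omega)] at h2
            exact absurd h2 (Nat.ne_of_lt (hT'n _ _ (by omega)))
          · rintro ⟨h1, h2⟩
            exact ⟨h1, by rw [if_neg (by omega), if_pos h1]⟩
        have hcount : SSYT.weight ⟨E, hrw, hcs, hzo⟩ m.val = a := by
          unfold SSYT.weight
          rw [Nat.card_congr (Equiv.subtypeEquivRight hseteq)]
          rw [natCard_cells hanti (N := n+1) (fun m => hμ0 m) (fun p => ν p.1 ≤ p.2)]
          have hsd : ((range (n+1) ×ˢ range (μ 0 + 1)).filter
                (fun p => p.2 < μ p.1)).filter (fun p => ν p.1 ≤ p.2) =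
              boxF μ (n+1) (μ 0 + 1) \ boxF ν (n+1) (μ 0 + 1) := by
            ext p
            simp only [boxF, mem_filter, mem_sdiff, mem_product, mem_range]
            have := (hstrip p.1).2
            constructor
            · rintro ⟨⟨⟨u1, u2⟩, u3⟩, u4⟩
              exact ⟨⟨⟨u1, u2⟩, u3⟩, by intro ⟨_, hc⟩; omega⟩
            · rintro ⟨⟨⟨u1, u2⟩, u3⟩, u4⟩
              refine ⟨⟨⟨u1, u2⟩, u3⟩, ?_⟩
              by_contra hc
              exact u4 ⟨⟨u1, u2⟩, by omega⟩
          rw [hsd, Finset.card_sdiff_of_subset]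
          · rw [boxF_card hanti _ _ (by omega),
              boxF_card hνanti _ _ (by have := (hstrip 0).2; omega)]
            have := hk (n+1)
            have hμn1 : μ (n+1) = 0 := hμ0 (n+1) (by omega)
            omega
          · intro p hp
            simp only [boxF, mem_filter, mem_product, mem_range] at hp ⊢
            have := (hstrip p.1).2
            exact ⟨⟨hp.1.1, hp.1.2⟩, by omega⟩
        have hml : m = Fin.last n := Fin.ext (by simpa using hm)
        rw [hcount, hml]
      · -- old letters
        have hmn : m.val < n := by have := m.isLt; omega
        have hseteq : ∀ p : ℕ × ℕ,
            (p.2 < μ p.1 ∧ E p.1 p.2 = m.val) ↔ (p.2 < ν p.1 ∧ T'.entry p.1 p.2 = m.val) := by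
          intro p
          simp only [hE]
          constructor
          · rintro ⟨h1, h2⟩
            by_cases hc : p.2 < ν p.1
            · rw [if_pos hc] at h2; exact ⟨hc, h2⟩
            · rw [if_neg hc, if_pos h1] at h2; omega
          · rintro ⟨h1, h2⟩
            have := (hstrip p.1).2
            exact ⟨by omega, by rw [if_pos h1]; exact h2⟩
        have : SSYT.weight ⟨E, hrw, hcs, hzo⟩ m.val = T'.weight m.val := by
          unfold SSYT.weight
          exact Nat.card_congr (Equiv.subtypeEquivRight hseteq)
        rw [this, hT'w ⟨m.val, hmn⟩]
        simp only [hα']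
        exact congrArg α (Fin.ext rfl)


lemma perm_hull_perm {n : ℕ} (lam : ℕ → ℕ) (π : Equiv.Perm (Fin n))
    {w : Fin n → ℝ}
    (hw : w ∈ convexHull ℝ {v : Fin n → ℝ | ∃ σ : Equiv.Perm (Fin n),
      ∀ i, v i = (lam (σ i).val : ℝ)}) :
    (fun i => w (π i)) ∈ convexHull ℝ {v : Fin n → ℝ | ∃ σ : Equiv.Perm (Fin n),
      ∀ i, v i = (lam (σ i).val : ℝ)} := by
  set S := {v : Fin n → ℝ | ∃ σ : Equiv.Perm (Fin n), ∀ i, v i = (lam (σ i).val : ℝ)} with hS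
  let Φ : (Fin n → ℝ) →ₗ[ℝ] (Fin n → ℝ) :=
    { toFun := fun v => fun i => v (π i)
      map_add' := fun x y => rfl
      map_smul' := fun c x => rfl }
  have hsub : convexHull ℝ S ⊆ Φ ⁻¹' (convexHull ℝ S) := by
    apply convexHull_min
    · intro v hv
      obtain ⟨σ, hσ⟩ := hv
      apply subset_convexHull
      exact ⟨π.trans σ, fun i => hσ (π i)⟩
    · exact (convex_convexHull ℝ S).linear_preimage Φ
  exact hsub hw

lemma sum_filter_val_lt {M : Type*} [AddCommMonoid M] (n k : ℕ) (hk : k ≤ n) (f : ℕ → M) :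
    ∑ i ∈ (Finset.univ : Finset (Fin n)).filter (fun i => i.val < k), f i.val
      = ∑ t ∈ range k, f t := by
  rcases Nat.eq_zero_or_pos n with hn | hn
  · subst hn
    have hk0 : k = 0 := by omega
    subst hk0
    simp
  apply Finset.sum_nbij' (i := fun i => i.val) (j := fun t => (⟨t % n, Nat.mod_lt _ hn⟩ : Fin n))
  · intro a ha; simp only [mem_filter] at ha; simpa using ha.2
  · intro t ht
    simp only [mem_range] at ht
    simp only [mem_filter, mem_univ, true_and]
    rw [Nat.mod_eq_of_lt (by omega)]
    omega
  · intro a ha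
    simp only [mem_filter] at ha
    exact Fin.ext (by simp [Nat.mod_eq_of_lt a.isLt])
  · intro t ht
    simp only [mem_range] at ht
    simp [Nat.mod_eq_of_lt (by omega : t < n)]
  · intro a _; rfl

lemma card_filter_val_lt (n k : ℕ) (hk : k ≤ n) :
    ((Finset.univ : Finset (Fin n)).filter (fun i => i.val < k)).card = k := by
  have := sum_filter_val_lt n k hk (fun _ => (1 : ℕ))
  simpa using this


lemma mem_S_of_eq {n : ℕ} (lam A : ℕ → ℕ) (h : ∀ t, t < n → A t = lam t) :
    (fun i : Fin n => (A i.val : ℝ)) ∈ convexHull ℝ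
      {v : Fin n → ℝ | ∃ σ : Equiv.Perm (Fin n), ∀ i, v i = (lam (σ i).val : ℝ)} := by
  apply subset_convexHull
  refine ⟨Equiv.refl _, fun i => ?_⟩
  show (A i.val : ℝ) = (lam i.val : ℝ)
  rw [h i.val i.isLt]

lemma rado_aux (n : ℕ) (B : ℕ) : ∀ (lam A : ℕ → ℕ),
    Antitone lam → (∀ m, n ≤ m → lam m = 0) →
    Antitone A → (∀ m, n ≤ m → A m = 0) →
    (∀ k, ∑ t ∈ range k, A t ≤ ∑ t ∈ range k, lam t) →
    (∑ t ∈ range n, A t = ∑ t ∈ range n, lam t) →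
    (∑ k ∈ range (n+1), (∑ t ∈ range k, lam t - ∑ t ∈ range k, A t) ≤ B) →
    (fun i : Fin n => (A i.val : ℝ)) ∈ convexHull ℝ
      {v : Fin n → ℝ | ∃ σ : Equiv.Perm (Fin n), ∀ i, v i = (lam (σ i).val : ℝ)} := by
  classical
  induction B with
  | zero =>
    intro lam A hlanti hl0 hAanti hA0 hdom htot hmeas
    apply mem_S_of_eq
    have hzero : ∀ k ∈ range (n+1), ∑ t ∈ range k, lam t - ∑ t ∈ range k, A t = 0 :=
      Finset.sum_eq_zero_iff.1 (Nat.le_zero.1 hmeas)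
    have heq : ∀ k, k ≤ n → ∑ t ∈ range k, A t = ∑ t ∈ range k, lam t := by
      intro k hk
      have h1 := hzero k (mem_range.2 (by omega))
      have h2 := hdom k
      omega
    intro t ht
    have h1 := heq t (by omega)
    have h2 := heq (t+1) (by omega)
    rw [Finset.sum_range_succ, Finset.sum_range_succ] at h2
    omega
  | succ B IH =>
    intro lam A hlanti hl0 hAanti hA0 hdom htot hmeas
    set S := {v : Fin n → ℝ | ∃ σ : Equiv.Perm (Fin n), ∀ i, v i = (lam (σ i).val : ℝ)}
      with hSdef
    by_cases hdir : ∀ t, t < n → A t = lam t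
    · exact mem_S_of_eq lam A hdir
    push_neg at hdir
    obtain ⟨t₀, ht₀n, ht₀⟩ := hdir
    have hexI : ∃ t, A t ≠ lam t := ⟨t₀, ht₀⟩
    set i₀ := Nat.find hexI with hi₀def
    have hi₀ : A i₀ ≠ lam i₀ := Nat.find_spec hexI
    have hi₀min : ∀ t, t < i₀ → A t = lam t := by
      intro t ht
      have := Nat.find_min hexI ht
      simpa using this
    have hi₀n : i₀ < n := by
      by_contra hc
      exact hi₀ (by rw [hA0 i₀ (by omega), hl0 i₀ (by omega)])
    clear hi₀def
    clear_value i₀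
    have hpre : ∑ t ∈ range i₀, A t = ∑ t ∈ range i₀, lam t :=
      Finset.sum_congr rfl (fun t ht => hi₀min t (mem_range.1 ht))
    have hi₀lt : A i₀ < lam i₀ := by
      have h1 := hdom (i₀+1)
      rw [Finset.sum_range_succ, Finset.sum_range_succ] at h1
      omega
    -- first return to equality
    have hexR : ∃ t, i₀ < t ∧ ∑ s ∈ range t, A s = ∑ s ∈ range t, lam s := ⟨n, hi₀n, htot⟩
    set r := Nat.find hexR with hrdef
    have hr : i₀ < r ∧ ∑ s ∈ range r, A s = ∑ s ∈ range r, lam s := Nat.find_spec hexR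
    have hrn : r ≤ n := Nat.find_le ⟨hi₀n, htot⟩
    have hrstrict : ∀ t, i₀ < t → t < r → ∑ s ∈ range t, A s < ∑ s ∈ range t, lam s := by
      intro t h1 h2
      have h3 := Nat.find_min hexR h2
      simp only [not_and] at h3
      have h4 := h3 h1
      have h5 := hdom t
      omega
    clear hrdef
    clear_value r
    set V := lam i₀ with hVdef
    have hV1 : 1 ≤ V := by omega
    have hwinA : ∀ t, i₀ ≤ t → A t ≤ V - 1 := by
      intro t ht
      have := hAanti ht
      omega
    have hr2 : i₀ + 2 ≤ r := by
      by_contra hc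
      have hreq : r = i₀ + 1 := by omega
      have h2 := hr.2
      rw [hreq, Finset.sum_range_succ, Finset.sum_range_succ] at h2
      omega
    have hlam_r1 : lam (r-1) < V := by
      have h2 := hr.2
      have h3 := hrstrict (r-1) (by omega) (by omega)
      have h4 : ∑ s ∈ range ((r-1)+1), A s = ∑ s ∈ range (r-1), A s + A (r-1) :=
        Finset.sum_range_succ A (r-1)
      have h5 : ∑ s ∈ range ((r-1)+1), lam s = ∑ s ∈ range (r-1), lam s + lam (r-1) :=
        Finset.sum_range_succ lam (r-1)
      rw [show (r-1)+1 = r from by omega] at h4 h5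
      have h6 : A (r-1) ≤ A i₀ := hAanti (by omega)
      omega
    -- q : first strict descent of lam after i₀
    have hexQ : ∃ t, i₀ < t ∧ lam t < V := ⟨r-1, by omega, hlam_r1⟩
    set q := Nat.find hexQ with hqdef
    have hq : i₀ < q ∧ lam q < V := Nat.find_spec hexQ
    have hqmin : ∀ t, i₀ < t → t < q → lam t = V := by
      intro t h1 h2
      have h3 := Nat.find_min hexQ h2
      simp only [not_and, not_lt] at h3
      have h4 := h3 h1
      have h5 : lam t ≤ lam i₀ := hlanti (le_of_lt h1)
      omega
    have hqr : q ≤ r - 1 := Nat.find_le ⟨by omega, hlam_r1⟩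
    have hq1 : lam (q-1) = V := by
      rcases eq_or_lt_of_le (show i₀ ≤ q - 1 by omega) with h | h
      · rw [← h]
      · exact hqmin (q-1) h (by omega)
    -- q₂ : first place where lam drops at least 2 below V
    have hexQ2 : ∃ t, i₀ < t ∧ t < r ∧ lam t + 2 ≤ V := by
      by_contra hc
      push_neg at hc
      have hIA : ∑ t ∈ Finset.Ico i₀ r, A t = ∑ t ∈ Finset.Ico i₀ r, lam t := by
        have e1 : ∑ t ∈ range i₀, A t + ∑ t ∈ Finset.Ico i₀ r, A t = ∑ t ∈ range r, A t :=
          Finset.sum_range_add_sum_Ico _ (by omega)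
        have e2 : ∑ t ∈ range i₀, lam t + ∑ t ∈ Finset.Ico i₀ r, lam t
            = ∑ t ∈ range r, lam t := Finset.sum_range_add_sum_Ico _ (by omega)
        have := hr.2
        omega
      have hbotA : ∑ t ∈ Finset.Ico i₀ r, A t
          = A i₀ + ∑ t ∈ Finset.Ico (i₀+1) r, A t :=
        Finset.sum_eq_sum_Ico_succ_bot (by omega) _
      have hbotL : ∑ t ∈ Finset.Ico i₀ r, lam t
          = lam i₀ + ∑ t ∈ Finset.Ico (i₀+1) r, lam t :=
        Finset.sum_eq_sum_Ico_succ_bot (by omega) _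
      have hA_up : ∑ t ∈ Finset.Ico (i₀+1) r, A t ≤ ∑ t ∈ Finset.Ico (i₀+1) r, (V - 1) :=
        Finset.sum_le_sum (fun t ht => hwinA t (by have := (Finset.mem_Ico.1 ht).1; omega))
      have hL_lo : ∑ t ∈ Finset.Ico (i₀+1) r, (V-1) ≤ ∑ t ∈ Finset.Ico (i₀+1) r, lam t := by
        apply Finset.sum_le_sum
        intro t ht
        have h3 := (Finset.mem_Ico.1 ht).1
        have h4 := (Finset.mem_Ico.1 ht).2
        have := hc t (by omega) (by omega)
        omega
      have hA0' : A i₀ ≤ V - 1 := hwinA i₀ le_rfl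
      omega
    set q₂ := Nat.find hexQ2 with hq₂def
    have hq₂ : i₀ < q₂ ∧ q₂ < r ∧ lam q₂ + 2 ≤ V := Nat.find_spec hexQ2
    have hq₂min : ∀ t, i₀ < t → t < q₂ → V ≤ lam t + 1 := by
      intro t h1 h2
      have h3 := Nat.find_min hexQ2 h2
      simp only [not_and, not_le] at h3
      have h4 := h3 h1 (by omega)
      omega
    have hqq₂ : q ≤ q₂ := Nat.find_le ⟨hq₂.1, by omega⟩
    clear hqdef hq₂def
    clear_value q q₂
    have hq₂n : q₂ < n := by omega
    have hq1n : q - 1 < n := by omega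
    have hq1q₂ : q - 1 < q₂ := by omega
    -- the moved shape
    set L2 : ℕ → ℕ := fun t => if t = q - 1 then V - 1 else if t = q₂ then lam q₂ + 1 else lam t
      with hL2def
    have hL2q1 : L2 (q-1) = V - 1 := by simp [hL2def]
    have hL2q₂ : L2 q₂ = lam q₂ + 1 := by
      simp only [hL2def]
      rw [if_neg (show q₂ ≠ q - 1 by omega)]
      simp
    have hL2other : ∀ t, t ≠ q-1 → t ≠ q₂ → L2 t = lam t := by
      intro t h1 h2
      simp only [hL2def]
      rw [if_neg h1, if_neg h2]
    have hL2anti : Antitone L2 := by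
      apply antitone_nat_of_succ_le
      intro t
      have hmono : lam (t+1) ≤ lam t := hlanti (by omega)
      rcases eq_or_ne t (q-1) with h1 | h1
      · have e1 : L2 t = V - 1 := by rw [h1]; exact hL2q1
        rcases eq_or_ne (t+1) q₂ with h2 | h2
        · have e2 : L2 (t+1) = lam q₂ + 1 := by rw [h2]; exact hL2q₂
          have := hq₂.2.2
          omega
        · have e2 : L2 (t+1) = lam (t+1) := hL2other (t+1) (by omega) h2
          have e3 : lam (t+1) = lam q := by rw [show t+1 = q from by omega]
          have := hq.2
          omega
      · rcases eq_or_ne t q₂ with h2 | h2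
        · have e1 : L2 t = lam q₂ + 1 := by rw [h2]; exact hL2q₂
          have e2 : L2 (t+1) = lam (t+1) := hL2other (t+1) (by omega) (by omega)
          have e3 : lam (t+1) ≤ lam q₂ := hlanti (by omega)
          omega
        · rw [hL2other t h1 h2]
          rcases eq_or_ne (t+1) (q-1) with h3 | h3
          · rw [h3, hL2q1]
            have h4 : lam (q-1) ≤ lam t := hlanti (by omega)
            omega
          · rcases eq_or_ne (t+1) q₂ with h4 | h4
            · rw [h4, hL2q₂]
              have h5 : i₀ < t := by omega
              have h6 := hq₂min t h5 (by omega)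
              omega
            · rw [hL2other (t+1) h3 h4]
              exact hmono
    have hL20 : ∀ m, n ≤ m → L2 m = 0 := by
      intro m hm
      rw [hL2other m (by omega) (by omega)]
      exact hl0 m hm
    -- partial sums of L2
    have hpoint : ∀ t, L2 t + (if t = q-1 then 1 else 0) = lam t + (if t = q₂ then 1 else 0) := by
      intro t
      rcases eq_or_ne t (q-1) with h | h
      · rw [h, hL2q1, if_pos rfl, if_neg (by omega), hq1]
        omega
      · rcases eq_or_ne t q₂ with h2 | h2
        · rw [h2, hL2q₂, if_neg (by omega), if_pos rfl]
        · rw [hL2other t h h2, if_neg h, if_neg h2]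
    have hps : ∀ k, ∑ t ∈ range k, L2 t + (if q-1 < k then 1 else 0)
        = ∑ t ∈ range k, lam t + (if q₂ < k then 1 else 0) := by
      intro k
      have h1 : ∑ t ∈ range k, (L2 t + (if t = q-1 then 1 else 0))
          = ∑ t ∈ range k, (lam t + (if t = q₂ then 1 else 0)) :=
        Finset.sum_congr rfl (fun t _ => hpoint t)
      rw [Finset.sum_add_distrib, Finset.sum_add_distrib] at h1
      have h2 : ∑ t ∈ range k, (if t = q-1 then (1:ℕ) else 0) = if q-1 < k then 1 else 0 := by
        rw [Finset.sum_ite_eq' (range k) (q-1) (fun _ => (1:ℕ))]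
        simp [Finset.mem_range]
      have h3 : ∑ t ∈ range k, (if t = q₂ then (1:ℕ) else 0) = if q₂ < k then 1 else 0 := by
        rw [Finset.sum_ite_eq' (range k) q₂ (fun _ => (1:ℕ))]
        simp [Finset.mem_range]
      rw [h2, h3] at h1
      exact h1
    have hL2le : ∀ k, ∑ t ∈ range k, L2 t ≤ ∑ t ∈ range k, lam t := by
      intro k
      have h1 := hps k
      by_cases hc1 : q - 1 < k <;> by_cases hc2 : q₂ < k <;>
        simp [hc1, hc2] at h1 <;> omega
    have hdom2 : ∀ k, ∑ t ∈ range k, A t ≤ ∑ t ∈ range k, L2 t := by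
      intro k
      have h1 := hps k
      have h2 := hdom k
      by_cases hc1 : q - 1 < k
      · by_cases hc2 : q₂ < k
        · rw [if_pos hc1, if_pos hc2] at h1
          omega
        · have h3 := hrstrict k (by omega) (by omega)
          rw [if_pos hc1, if_neg hc2] at h1
          omega
      · rw [if_neg hc1, if_neg (by omega)] at h1
        omega
    have htot2 : ∑ t ∈ range n, A t = ∑ t ∈ range n, L2 t := by
      have h1 := hps n
      rw [if_pos (by omega), if_pos (by omega)] at h1
      omega
    have hmeas2 : ∑ k ∈ range (n+1), (∑ t ∈ range k, L2 t - ∑ t ∈ range k, A t) ≤ B := by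
      have hlt : ∑ k ∈ range (n+1), (∑ t ∈ range k, L2 t - ∑ t ∈ range k, A t)
          < ∑ k ∈ range (n+1), (∑ t ∈ range k, lam t - ∑ t ∈ range k, A t) := by
        apply Finset.sum_lt_sum
        · intro k _
          exact Nat.sub_le_sub_right (hL2le k) _
        · refine ⟨q₂, mem_range.2 (by omega), ?_⟩
          have h1 := hps q₂
          rw [if_pos (by omega), if_neg (by omega)] at h1
          have h2 := hrstrict q₂ (by omega) (by omega)
          omega
      omega
    -- conclude by induction
    have hmem2 := IH L2 A hL2anti hL20 hAanti hA0 hdom2 htot2 hmeas2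
    have hsub : {v : Fin n → ℝ | ∃ σ : Equiv.Perm (Fin n), ∀ i, v i = (L2 (σ i).val : ℝ)}
        ⊆ convexHull ℝ S := by
      rintro v ⟨σ, hσ⟩
      set pF : Fin n := ⟨q-1, hq1n⟩ with hpF
      set qF : Fin n := ⟨q₂, hq₂n⟩ with hqF
      have hpqF : pF ≠ qF := by
        simp only [hpF, hqF, ne_eq, Fin.mk.injEq]
        omega
      set sw := Equiv.swap pF qF with hsw
      set u : Fin n → ℝ := fun i => (lam (σ i).val : ℝ) with hu
      set u' : Fin n → ℝ := fun i => (lam ((sw (σ i)).val) : ℝ) with hu'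
      have huS : u ∈ S := ⟨σ, fun i => rfl⟩
      have hu'S : u' ∈ S := ⟨σ.trans sw, fun i => rfl⟩
      set cc : ℝ := (lam q₂ : ℝ) with hcc
      set vv : ℝ := (V : ℝ) with hvv
      have hden : cc + 2 ≤ vv := by
        have := hq₂.2.2
        simp only [hcc, hvv]
        exact_mod_cast this
      have hdenpos : (0:ℝ) < vv - cc := by linarith
      set θ : ℝ := (vv - 1 - cc)/(vv - cc) with hθ
      have hθ0 : 0 ≤ θ := div_nonneg (by linarith) (by linarith)
      have hθ1 : 0 ≤ 1 - θ := by
        have h1 : 1 - θ = 1/(vv - cc) := by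
          rw [hθ, eq_div_iff hdenpos.ne', sub_mul, div_mul_cancel₀ _ hdenpos.ne']; ring
        rw [h1]
        positivity
      have halg1 : θ * vv + (1 - θ) * cc = vv - 1 := by
        have hθm : θ * (vv - cc) = vv - 1 - cc := by rw [hθ, div_mul_cancel₀ _ hdenpos.ne']
        linear_combination hθm
      have halg2 : θ * cc + (1 - θ) * vv = cc + 1 := by
        have hθm : θ * (vv - cc) = vv - 1 - cc := by rw [hθ, div_mul_cancel₀ _ hdenpos.ne']
        linear_combination -hθm
      have hvT : v = θ • u + (1 - θ) • u' := by
        funext i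
        simp only [Pi.add_apply, Pi.smul_apply, smul_eq_mul]
        rw [hσ i]
        rcases eq_or_ne (σ i) pF with h | h
        · rw [h]
          have h1 : sw pF = qF := Equiv.swap_apply_left _ _
          simp only [hu, hu', h, h1]
          show ((L2 (q-1) : ℕ) : ℝ) = θ * ((lam (q-1) : ℕ) : ℝ) + (1 - θ) * ((lam q₂ : ℕ) : ℝ)
          rw [hL2q1, hq1]
          have h4 : ((V - 1 : ℕ) : ℝ) = vv - 1 := by
            simp only [hvv]
            push_cast [hV1]
            ring
          rw [h4, ← hcc, ← hvv]
          linarith [halg1]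
        · rcases eq_or_ne (σ i) qF with h2 | h2
          · rw [h2]
            have h1 : sw qF = pF := Equiv.swap_apply_right _ _
            simp only [hu, hu', h2, h1]
            show ((L2 q₂ : ℕ) : ℝ) = θ * ((lam q₂ : ℕ) : ℝ) + (1 - θ) * ((lam (q-1) : ℕ) : ℝ)
            rw [hL2q₂, hq1]
            push_cast
            rw [← hcc, ← hvv]
            linarith [halg2]
          · have h1 : sw (σ i) = σ i := Equiv.swap_apply_of_ne_of_ne h h2
            simp only [hu, hu', h1]
            have h3 : (σ i).val ≠ q - 1 := fun hc => h (Fin.ext hc)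
            have h4 : (σ i).val ≠ q₂ := fun hc => h2 (Fin.ext hc)
            rw [hL2other _ h3 h4]
            ring
      rw [hvT]
      exact (convex_convexHull ℝ S) (subset_convexHull ℝ S huS) (subset_convexHull ℝ S hu'S)
        hθ0 hθ1 (by ring)
    have hfinal := convexHull_min hsub (convex_convexHull ℝ S)
    exact hfinal hmem2


lemma subdom_mem_hull {n : ℕ} (lam : ℕ → ℕ) (hlanti : Antitone lam)
    (hl0 : ∀ m, n ≤ m → lam m = 0) (α : Fin n → ℕ)
    (hbd : ∀ V : Finset (Fin n), ∑ i ∈ V, α i ≤ ∑ t ∈ range V.card, lam t)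
    (htot : ∑ i, α i = ∑ t ∈ range n, lam t) :
    (fun i : Fin n => (α i : ℝ)) ∈ convexHull ℝ
      {v : Fin n → ℝ | ∃ σ : Equiv.Perm (Fin n), ∀ i, v i = (lam (σ i).val : ℝ)} := by
  classical
  set τ : Equiv.Perm (Fin n) := (Fin.revPerm).trans (Tuple.sort α) with hτ
  set A : ℕ → ℕ := fun t => if h : t < n then α (τ ⟨t, h⟩) else 0 with hA
  have hA0 : ∀ m, n ≤ m → A m = 0 := by
    intro m hm
    simp only [hA]
    rw [dif_neg (by omega)]
  have hAval : ∀ i : Fin n, A i.val = α (τ i) := by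
    intro i
    simp only [hA]
    rw [dif_pos i.isLt]
  have hAanti : Antitone A := by
    apply antitone_nat_of_succ_le
    intro t
    by_cases h1 : t + 1 < n
    · have h2 : t < n := by omega
      simp only [hA]
      rw [dif_pos h1, dif_pos h2]
      have h3 : (⟨t, h2⟩ : Fin n) ≤ ⟨t+1, h1⟩ := by simp [Fin.mk_le_mk]
      have h4 : Fin.rev ⟨t+1, h1⟩ ≤ Fin.rev ⟨t, h2⟩ := Fin.rev_le_rev.2 h3
      have h5 := Tuple.monotone_sort α h4
      simpa [hτ] using h5
    · simp only [hA]
      rw [dif_neg h1]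
      omega
  have hsumk : ∀ k, k ≤ n → ∑ t ∈ range k, A t
      = ∑ i ∈ (Finset.univ : Finset (Fin n)).filter (fun i => i.val < k), α (τ i) := by
    intro k hk
    rw [← sum_filter_val_lt n k hk A]
    exact Finset.sum_congr rfl (fun i _ => hAval i)
  have htot' : ∑ t ∈ range n, A t = ∑ t ∈ range n, lam t := by
    rw [hsumk n le_rfl, Finset.filter_true_of_mem (fun i _ => i.isLt)]
    rw [Equiv.sum_comp τ α]
    exact htot
  have hdom' : ∀ k, ∑ t ∈ range k, A t ≤ ∑ t ∈ range k, lam t := by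
    intro k
    by_cases hk : k ≤ n
    · rw [hsumk k hk]
      have h1 : ∑ i ∈ ((Finset.univ : Finset (Fin n)).filter (fun i => i.val < k)).image τ, α i
          = ∑ i ∈ (Finset.univ : Finset (Fin n)).filter (fun i => i.val < k), α (τ i) :=
        Finset.sum_image (fun x _ y _ h => τ.injective h)
      have h2 := hbd (((Finset.univ : Finset (Fin n)).filter (fun i => i.val < k)).image τ)
      rw [h1, Finset.card_image_of_injective _ τ.injective, card_filter_val_lt n k hk] at h2
      exact h2
    · have h1 : ∑ t ∈ range k, A t = ∑ t ∈ range n, A t := by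
        rw [← Finset.sum_subset (range_subset_range.2 (by omega : n ≤ k))]
        intro x hx hnx
        exact hA0 x (by simpa using hnx)
      rw [h1, htot']
      exact Finset.sum_le_sum_of_subset (range_subset_range.2 (by omega))
  have hw := rado_aux n (∑ k ∈ range (n+1), (∑ t ∈ range k, lam t - ∑ t ∈ range k, A t))
    lam A hlanti hl0 hAanti hA0 hdom' htot' le_rfl
  have heq : (fun i : Fin n => (α i : ℝ)) = fun i => (A ((τ.symm i)).val : ℝ) := by
    funext i
    rw [hAval (τ.symm i), Equiv.apply_symm_apply]
  rw [heq]
  exact perm_hull_perm lam τ.symm hw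


lemma strictMono_nat_le {k : ℕ} (f : Fin k → ℕ) (hf : StrictMono f) :
    ∀ t : Fin k, t.val ≤ f t := by
  intro t
  obtain ⟨t, ht⟩ := t
  induction t with
  | zero => exact Nat.zero_le _
  | succ m ih =>
    have hmk : m < k := by omega
    have h1 : m ≤ f ⟨m, hmk⟩ := by simpa using ih hmk
    have h2 : f ⟨m, hmk⟩ < f ⟨m+1, ht⟩ := hf (by simp [Fin.mk_lt_mk])
    show m + 1 ≤ f ⟨m+1, ht⟩
    omega

lemma sum_lam_le {n : ℕ} (lam : ℕ → ℕ) (hlanti : Antitone lam) (W : Finset (Fin n)) :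
    ∑ i ∈ W, lam i.val ≤ ∑ t ∈ range W.card, lam t := by
  classical
  set k := W.card with hk
  have iso := W.orderIsoOfFin hk.symm
  have h1 : ∑ i ∈ W, lam i.val = ∑ t : Fin k, lam ((iso t : Fin n)).val := by
    rw [← Finset.sum_coe_sort W (fun i => lam i.val)]
    exact (Equiv.sum_comp iso.toEquiv (fun x : W => lam (x : Fin n).val)).symm
  have h2 : ∀ t : Fin k, lam ((iso t : Fin n)).val ≤ lam t.val := by
    intro t
    apply hlanti
    exact strictMono_nat_le (fun t => ((iso t : Fin n)).val)
      (fun a b hab => by exact_mod_cast (iso.strictMono hab)) t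
  calc ∑ i ∈ W, lam i.val = ∑ t : Fin k, lam ((iso t : Fin n)).val := h1
    _ ≤ ∑ t : Fin k, lam t.val := Finset.sum_le_sum (fun t _ => h2 t)
    _ = ∑ t ∈ range k, lam t := Fin.sum_univ_eq_sum_range _ _

lemma perm_sum_lam {n : ℕ} (lam : ℕ → ℕ) (σ : Equiv.Perm (Fin n)) :
    ∑ i : Fin n, lam (σ i).val = ∑ t ∈ range n, lam t := by
  rw [Equiv.sum_comp σ (fun j => lam j.val)]
  exact Fin.sum_univ_eq_sum_range _ _

lemma dominates_antisymm (lam μ : ℕ → ℕ) (h1 : Dominates lam μ) (h2 : Dominates μ lam) :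
    μ = lam := by
  funext t
  have a1 := h1 t
  have a2 := h2 t
  have a3 := h1 (t+1)
  have a4 := h2 (t+1)
  rw [Finset.sum_range_succ, Finset.sum_range_succ] at a3 a4
  omega

lemma image_sigma_filter {n : ℕ} (σ : Equiv.Perm (Fin n)) (k : ℕ) :
    ((Finset.univ : Finset (Fin n)).filter (fun i => (σ i).val < k)).image σ
      = (Finset.univ : Finset (Fin n)).filter (fun j => j.val < k) := by
  ext j
  simp only [mem_image, mem_filter, mem_univ, true_and]
  constructor
  · rintro ⟨i, hi, rfl⟩; exact hi
  · intro hj; exact ⟨σ.symm j, by simpa using hj, by simp⟩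

-- halfspace bounds on the hull
lemma hull_sum_le {n : ℕ} (lam : ℕ → ℕ) (hlanti : Antitone lam) {x : Fin n → ℝ}
    (hx : x ∈ convexHull ℝ {v : Fin n → ℝ | ∃ σ : Equiv.Perm (Fin n),
      ∀ i, v i = (lam (σ i).val : ℝ)}) (V : Finset (Fin n)) :
    ∑ i ∈ V, x i ≤ ((∑ t ∈ range V.card, lam t : ℕ) : ℝ) := by
  have hlin : IsLinearMap ℝ (fun w : Fin n → ℝ => ∑ i ∈ V, w i) :=
    ⟨fun a b => Finset.sum_add_distrib, fun c w => by
      simp only [Pi.smul_apply, smul_eq_mul, Finset.mul_sum]⟩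
  have hconv := convex_halfSpace_le hlin ((∑ t ∈ range V.card, lam t : ℕ) : ℝ)
  have hsub : {v : Fin n → ℝ | ∃ σ : Equiv.Perm (Fin n), ∀ i, v i = (lam (σ i).val : ℝ)}
      ⊆ {w : Fin n → ℝ | (fun w => ∑ i ∈ V, w i) w ≤ ((∑ t ∈ range V.card, lam t : ℕ) : ℝ)} := by
    rintro v ⟨σ, hσ⟩
    simp only [Set.mem_setOf_eq]
    have h1 : ∑ i ∈ V, v i = ((∑ i ∈ V, lam (σ i).val : ℕ) : ℝ) := by
      push_cast
      exact Finset.sum_congr rfl (fun i _ => hσ i)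
    rw [h1]
    have h2 : ∑ i ∈ V, lam (σ i).val = ∑ j ∈ V.image σ, lam j.val :=
      (Finset.sum_image (f := fun j : Fin n => lam j.val) (g := σ)
        (fun x _ y _ h => σ.injective h)).symm
    have h3 := sum_lam_le lam hlanti (V.image σ)
    rw [Finset.card_image_of_injective _ σ.injective] at h3
    exact_mod_cast h2 ▸ h3
  exact convexHull_min hsub hconv hx

lemma hull_sum_eq {n : ℕ} (lam : ℕ → ℕ) {x : Fin n → ℝ}
    (hx : x ∈ convexHull ℝ {v : Fin n → ℝ | ∃ σ : Equiv.Perm (Fin n),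
      ∀ i, v i = (lam (σ i).val : ℝ)}) :
    ∑ i, x i = ((∑ t ∈ range n, lam t : ℕ) : ℝ) := by
  have hlin : IsLinearMap ℝ (fun w : Fin n → ℝ => ∑ i, w i) :=
    ⟨fun a b => Finset.sum_add_distrib, fun c w => by
      simp only [Pi.smul_apply, smul_eq_mul, Finset.mul_sum]⟩
  have hconv := convex_hyperplane hlin ((∑ t ∈ range n, lam t : ℕ) : ℝ)
  have hsub : {v : Fin n → ℝ | ∃ σ : Equiv.Perm (Fin n), ∀ i, v i = (lam (σ i).val : ℝ)}
      ⊆ {w : Fin n → ℝ | (fun w => ∑ i, w i) w = ((∑ t ∈ range n, lam t : ℕ) : ℝ)} := by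
    rintro v ⟨σ, hσ⟩
    simp only [Set.mem_setOf_eq]
    have h1 : ∑ i, v i = ((∑ i : Fin n, lam (σ i).val : ℕ) : ℝ) := by
      push_cast
      exact Finset.sum_congr rfl (fun i _ => hσ i)
    rw [h1, perm_sum_lam lam σ]
  exact convexHull_min hsub hconv hx

lemma hull_nonneg {n : ℕ} (lam : ℕ → ℕ) {x : Fin n → ℝ}
    (hx : x ∈ convexHull ℝ {v : Fin n → ℝ | ∃ σ : Equiv.Perm (Fin n),
      ∀ i, v i = (lam (σ i).val : ℝ)}) (i : Fin n) :
    0 ≤ x i := by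
  have hlin : IsLinearMap ℝ (fun w : Fin n → ℝ => w i) := ⟨fun a b => rfl, fun c w => rfl⟩
  have hconv := convex_halfSpace_ge hlin (0 : ℝ)
  have hsub : {v : Fin n → ℝ | ∃ σ : Equiv.Perm (Fin n), ∀ i, v i = (lam (σ i).val : ℝ)}
      ⊆ {w : Fin n → ℝ | 0 ≤ (fun w => w i) w} := by
    rintro v ⟨σ, hσ⟩
    simp only [Set.mem_setOf_eq, hσ i]
    positivity
  exact convexHull_min hsub hconv hx

end NewtonSchurAux

/-- if `f = Σ_μ c_μ s_μ` (sum over partitions `μ` of `d`) in `x_1, …, x_n`,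
and `lam` is a partition of `d` with at most `n` parts such that `c_lam ≠ 0` and
`c_μ ≠ 0` only if `μ ⊴ lam`, then `Newton(f) = P_lam`; moreover if all `c_μ ≥ 0`
then `f` has saturated Newton polytope. -/
theorem newton_of_schur_combination
    (d n : ℕ) (hd : 1 ≤ d) (hn : 1 ≤ n)
    (S : Finset (ℕ → ℕ)) (hS : ∀ μ : ℕ → ℕ, μ ∈ S ↔ IsPartitionOf d μ)
    (c : (ℕ → ℕ) → ℝ) (g : (ℕ → ℕ) → MvPolynomial (Fin n) ℝ)
    (hg : ∀ μ ∈ S, IsSchurPoly n μ (g μ))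
    (f : MvPolynomial (Fin n) ℝ) (hf : f = ∑ μ ∈ S, c μ • g μ)
    (lam : ℕ → ℕ) (hlam : IsPartitionOf d lam) (hlen : ∀ m, n ≤ m → lam m = 0)
    (hclam : c lam ≠ 0)
    (hdom : ∀ μ ∈ S, c μ ≠ 0 → Dominates lam μ) :
    newtonPolytope f = permutahedron n lam ∧
      ((∀ μ ∈ S, 0 ≤ c μ) → HasSNP f) := by
  classical
  obtain ⟨hlamanti, N₀, hN₀, hsum₀⟩ := hlam
  have hlamS : lam ∈ S := (hS lam).2 ⟨hlamanti, N₀, hN₀, hsum₀⟩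
  have hsumn : ∑ t ∈ Finset.range n, lam t = d := by
    rcases le_total N₀ n with h | h
    · rw [sum_range_stable hN₀ h, hsum₀]
    · rw [← hsum₀, sum_range_stable hlen h]
  have hcoeff : ∀ α : Fin n → ℕ, coeffOf f α = ∑ μ ∈ S, c μ *
      (Nat.card {T : SSYT μ // (∀ i j, j < μ i → T.entry i j < n) ∧
        ∀ m : Fin n, T.weight (m : ℕ) = α m} : ℝ) := by
    intro α
    rw [hf]
    unfold coeffOf
    rw [MvPolynomial.coeff_sum]
    refine Finset.sum_congr rfl (fun μ hμ => ?_)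
    rw [MvPolynomial.coeff_smul, smul_eq_mul]
    congr 1
    exact hg μ hμ α
  -- support bounds
  have hsupp : ∀ α : Fin n → ℕ, coeffOf f α ≠ 0 →
      (∀ V : Finset (Fin n), ∑ i ∈ V, α i ≤ ∑ t ∈ Finset.range V.card, lam t)
      ∧ ∑ i, α i = ∑ t ∈ Finset.range n, lam t := by
    intro α hα
    rw [hcoeff α] at hα
    have hex : ∃ μ ∈ S, c μ ≠ 0 ∧
        (Nat.card {T : SSYT μ // (∀ i j, j < μ i → T.entry i j < n) ∧
          ∀ m : Fin n, T.weight (m : ℕ) = α m} : ℝ) ≠ 0 := by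
      by_contra hc
      push_neg at hc
      apply hα
      apply Finset.sum_eq_zero
      intro μ hμ
      rcases eq_or_ne (c μ) 0 with h | h
      · rw [h, zero_mul]
      · rw [hc μ hμ h, mul_zero]
    obtain ⟨μ, hμS, hcμ, hKμ⟩ := hex
    have hKnat : Nat.card {T : SSYT μ // (∀ i j, j < μ i → T.entry i j < n) ∧
        ∀ m : Fin n, T.weight (m : ℕ) = α m} ≠ 0 := by exact_mod_cast hKμ
    obtain ⟨⟨T, hTn, hTw⟩⟩ := (Nat.card_ne_zero.1 hKnat).1
    obtain ⟨hμanti, Nμ, hNμ, hsumμ⟩ := (hS μ).1 hμS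
    have hDom := hdom μ hμS hcμ
    constructor
    · intro V
      have h1 : ∑ i ∈ V, α i = ∑ m ∈ V, T.weight m.val :=
        Finset.sum_congr rfl (fun m _ => (hTw m).symm)
      rw [h1]
      exact le_trans (weight_subdom hμanti hNμ T V) (hDom V.card)
    · have h2 : ∑ i, α i = ∑ m : Fin n, T.weight m.val :=
        Finset.sum_congr rfl (fun m _ => (hTw m).symm)
      rw [h2, weight_total hμanti hNμ T hTn, hsumμ, hsumn]
  -- vertices are in the support
  have hvert : ∀ σ : Equiv.Perm (Fin n),
      coeffOf f (fun i => lam (σ i).val) ≠ 0 := by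
    intro σ
    rw [hcoeff _]
    rw [Finset.sum_eq_single_of_mem lam hlamS ?_]
    · -- main term
      apply mul_ne_zero hclam
      have hbds : ∀ V : Finset (Fin n),
          ∑ i ∈ V, lam (σ i).val ≤ ∑ t ∈ Finset.range V.card, lam t := by
        intro V
        have h2 : ∑ i ∈ V, lam (σ i).val = ∑ j ∈ V.image σ, lam j.val :=
          (Finset.sum_image (f := fun j : Fin n => lam j.val) (g := σ)
            (fun x _ y _ h => σ.injective h)).symm
        rw [h2]
        have h3 := sum_lam_le lam hlamanti (V.image σ)
        rwa [Finset.card_image_of_injective _ σ.injective] at h3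
      obtain ⟨T, hTn, hTw⟩ := exists_ssyt n lam hlamanti hlen (fun i => lam (σ i).val)
        hbds (perm_sum_lam lam σ)
      have hK := ssyt_card_ne_zero (by omega : 0 < n) hlamanti hlen
        (fun T => (∀ i j, j < lam i → T.entry i j < n) ∧
          ∀ m : Fin n, T.weight (m : ℕ) = lam (σ m).val)
        (fun T h => h.1) T ⟨hTn, hTw⟩
      exact_mod_cast hK
    · intro μ hμS hμne
      rcases eq_or_ne (c μ) 0 with h | h
      · rw [h, zero_mul]
      · have hK0 : (Nat.card {T : SSYT μ // (∀ i j, j < μ i → T.entry i j < n) ∧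
            ∀ m : Fin n, T.weight (m : ℕ) = lam (σ m).val} : ℝ) = 0 := by
          by_contra hK
          apply hμne
          have hKnat : Nat.card {T : SSYT μ // (∀ i j, j < μ i → T.entry i j < n) ∧
              ∀ m : Fin n, T.weight (m : ℕ) = lam (σ m).val} ≠ 0 := by
            exact_mod_cast hK
          obtain ⟨⟨T, hTn, hTw⟩⟩ := (Nat.card_ne_zero.1 hKnat).1
          obtain ⟨hμanti, Nμ, hNμ, hsumμ⟩ := (hS μ).1 hμS
          have hμrows : ∀ t, n ≤ t → μ t = 0 := rows_le_of_entries_lt hμanti T hTn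
          have hsumnμ : ∑ t ∈ Finset.range n, μ t = d := by
            rcases le_total Nμ n with hh | hh
            · rw [sum_range_stable hNμ hh, hsumμ]
            · rw [← hsumμ, sum_range_stable hμrows hh]
          have hDomμlam : Dominates μ lam := by
            intro k
            rcases le_or_gt k n with hk | hk
            · have hV := weight_subdom hμanti hNμ T
                ((Finset.univ : Finset (Fin n)).filter (fun i => (σ i).val < k))
              have hcard : ((Finset.univ : Finset (Fin n)).filter
                  (fun i => (σ i).val < k)).card = k := by
                have h1 := congrArg Finset.card (image_sigma_filter σ k)
                rwa [Finset.card_image_of_injective _ σ.injective,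
                  card_filter_val_lt n k hk] at h1
              rw [hcard] at hV
              have h2 : ∑ m ∈ (Finset.univ : Finset (Fin n)).filter
                    (fun i => (σ i).val < k), T.weight m.val
                  = ∑ m ∈ (Finset.univ : Finset (Fin n)).filter
                    (fun i => (σ i).val < k), lam (σ m).val :=
                Finset.sum_congr rfl (fun m _ => hTw m)
              have h3 : ∑ m ∈ (Finset.univ : Finset (Fin n)).filter
                    (fun i => (σ i).val < k), lam (σ m).val
                  = ∑ j ∈ (((Finset.univ : Finset (Fin n)).filter
                    (fun i => (σ i).val < k)).image σ), lam j.val :=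
                (Finset.sum_image (f := fun j : Fin n => lam j.val) (g := σ)
                  (fun x _ y _ h => σ.injective h)).symm
              rw [image_sigma_filter σ k, sum_filter_val_lt n k hk] at h3
              omega
            · have e1 : ∑ t ∈ Finset.range k, lam t = ∑ t ∈ Finset.range n, lam t :=
                sum_range_stable hlen (le_of_lt hk)
              have e2 : ∑ t ∈ Finset.range k, μ t = ∑ t ∈ Finset.range n, μ t :=
                sum_range_stable hμrows (le_of_lt hk)
              rw [e1, e2, hsumn, hsumnμ]
          exact dominates_antisymm lam μ (hdom μ hμS h) hDomμlam
        rw [hK0, mul_zero]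
  have hnewton : newtonPolytope f = permutahedron n lam := by
    apply Set.Subset.antisymm
    · apply convexHull_min ?_ (convex_convexHull ℝ _)
      rintro x ⟨α, hα, rfl⟩
      obtain ⟨hbds, htotα⟩ := hsupp α hα
      rw [hsumn] at htotα
      exact subdom_mem_hull lam hlamanti hlen α hbds (by rw [hsumn]; exact htotα)
    · apply convexHull_min ?_ (convex_convexHull ℝ _)
      rintro v ⟨σ, hσ⟩
      apply subset_convexHull
      exact ⟨fun i => lam (σ i).val, hvert σ, funext hσ⟩
  refine ⟨hnewton, fun hpos => ?_⟩
  intro x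
  constructor
  · rintro ⟨hxN, hxint⟩
    rw [hnewton] at hxN
    have hnn : ∀ i, 0 ≤ x i := fun i => hull_nonneg lam hxN i
    have hxa : ∀ i, ∃ a : ℕ, x i = (a : ℝ) := by
      intro i
      obtain ⟨m, hm⟩ := hxint i
      have hm0 : 0 ≤ m := by
        have := hnn i
        rw [hm] at this
        exact_mod_cast this
      refine ⟨m.toNat, ?_⟩
      rw [hm]
      rw [show ((m.toNat : ℕ) : ℝ) = ((m.toNat : ℤ) : ℝ) by push_cast; ring,
        Int.toNat_of_nonneg hm0]
    choose α hxα using hxa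
    have hxeq : x = fun i => (α i : ℝ) := funext hxα
    have hbds : ∀ V : Finset (Fin n), ∑ i ∈ V, α i ≤ ∑ t ∈ Finset.range V.card, lam t := by
      intro V
      have h1 := hull_sum_le lam hlamanti hxN V
      have h2 : ∑ i ∈ V, x i = ((∑ i ∈ V, α i : ℕ) : ℝ) := by
        rw [hxeq]
        push_cast
        rfl
      rw [h2] at h1
      exact_mod_cast h1
    have htotα : ∑ i, α i = ∑ t ∈ Finset.range n, lam t := by
      have h1 := hull_sum_eq lam hxN
      have h2 : ∑ i, x i = ((∑ i, α i : ℕ) : ℝ) := by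
        rw [hxeq]
        push_cast
        rfl
      rw [h2] at h1
      exact_mod_cast h1
    refine ⟨α, ?_, hxeq⟩
    rw [hcoeff α]
    have hclam' : 0 < c lam := lt_of_le_of_ne (hpos lam hlamS) (Ne.symm hclam)
    obtain ⟨T, hTn, hTw⟩ := exists_ssyt n lam hlamanti hlen α hbds htotα
    have hK := ssyt_card_ne_zero (by omega : 0 < n) hlamanti hlen
      (fun T => (∀ i j, j < lam i → T.entry i j < n) ∧
        ∀ m : Fin n, T.weight (m : ℕ) = α m)
      (fun T h => h.1) T ⟨hTn, hTw⟩
    have hKpos : (0:ℝ) < (Nat.card {T : SSYT lam // (∀ i j, j < lam i → T.entry i j < n) ∧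
        ∀ m : Fin n, T.weight (m : ℕ) = α m} : ℝ) :=
      Nat.cast_pos.2 (Nat.pos_of_ne_zero hK)
    have hsumpos : (0:ℝ) < ∑ μ ∈ S, c μ *
        (Nat.card {T : SSYT μ // (∀ i j, j < μ i → T.entry i j < n) ∧
          ∀ m : Fin n, T.weight (m : ℕ) = α m} : ℝ) := by
      apply Finset.sum_pos' (fun μ hμ => mul_nonneg (hpos μ hμ) (Nat.cast_nonneg _))
      exact ⟨lam, hlamS, mul_pos hclam' hKpos⟩
    exact ne_of_gt hsumpos
  · rintro ⟨α, hα, rfl⟩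
    refine ⟨subset_convexHull ℝ _ ⟨α, hα, rfl⟩, fun i => ⟨(α i : ℤ), by push_cast; ring⟩⟩
end

section
/- Let λ be a partition of d and let n ≥ 1. Then the set J = {α ∈ ℕ^n : α_1 + ⋯ + α_n = d and sort(α) ⊴ λ} is M-convex. -/
lemma strictMono_fin_le' {k : ℕ} {g : Fin k → ℕ} (hg : StrictMono g) :
    ∀ m : Fin k, (m : ℕ) ≤ g m := by
  intro m
  have key : ∀ v (h : v < k), v ≤ g ⟨v, h⟩ := by
    intro v
    induction v with
    | zero => intro h; exact Nat.zero_le _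
    | succ v ih =>
        intro h
        have hlt : v < k := by omega
        have h1 : (⟨v, hlt⟩ : Fin k) < ⟨v + 1, h⟩ := by
          simp [Fin.lt_def]
        have h2 := hg h1
        have h3 := ih hlt
        omega
  have := key m.val m.isLt
  simpa using this

lemma antitone_sum_le' {β : ℕ → ℕ} (hβ : Antitone β) (T : Finset ℕ) :
    ∑ t ∈ T, β t ≤ ∑ m ∈ Finset.range T.card, β m := by
  have himg : Finset.image (fun m : Fin T.card => T.orderEmbOfFin rfl m) Finset.univ = T := by
    ext x
    simp only [Finset.mem_image, Finset.mem_univ, true_and]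
    constructor
    · rintro ⟨m, rfl⟩; exact Finset.orderEmbOfFin_mem T rfl m
    · intro hx
      have : x ∈ Set.range (T.orderEmbOfFin rfl) := by
        rw [Finset.range_orderEmbOfFin]; exact hx
      obtain ⟨m, hm⟩ := this; exact ⟨m, hm⟩
  calc ∑ t ∈ T, β t = ∑ m : Fin T.card, β (T.orderEmbOfFin rfl m) := by
        have hinj : ∀ a ∈ (Finset.univ : Finset (Fin T.card)), ∀ b ∈ Finset.univ,
            T.orderEmbOfFin rfl a = T.orderEmbOfFin rfl b → a = b :=
          fun a _ b _ hab => (T.orderEmbOfFin rfl).injective hab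
        have hh := Finset.sum_image (f := β)
          (g := fun m : Fin T.card => T.orderEmbOfFin rfl m) (s := Finset.univ) hinj
        rw [himg] at hh
        exact hh
    _ ≤ ∑ m : Fin T.card, β (m : ℕ) := Finset.sum_le_sum (fun m _ =>
        hβ (strictMono_fin_le' (T.orderEmbOfFin rfl).strictMono m))
    _ = ∑ m ∈ Finset.range T.card, β m := Fin.sum_univ_eq_sum_range _ _

lemma feas_of_sortDom' {n : ℕ} {α : Fin n → ℕ} {lam : ℕ → ℕ}
    (h : SortDominatedBy n α lam) (S : Finset (Fin n)) :
    ∑ t ∈ S, α t ≤ ∑ t ∈ Finset.range S.card, lam t := by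
  obtain ⟨β, hanti, hzero, ⟨σ, hσ⟩, hdom⟩ := h
  have hval : ∀ t : Fin n, α t = β ((σ.symm t : Fin n) : ℕ) := by
    intro t; rw [hσ (σ.symm t), Equiv.apply_symm_apply]
  have hinj : Set.InjOn (fun t : Fin n => ((σ.symm t : Fin n) : ℕ)) S := by
    intro a _ b _ hab
    exact σ.symm.injective (Fin.val_injective hab)
  set T : Finset ℕ := S.image (fun t => ((σ.symm t : Fin n) : ℕ)) with hT
  have hcard : T.card = S.card := Finset.card_image_of_injOn hinj
  have h1 : ∑ t ∈ S, α t = ∑ m ∈ T, β m := by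
    rw [hT, Finset.sum_image hinj]
    exact Finset.sum_congr rfl (fun t _ => hval t)
  calc ∑ t ∈ S, α t = ∑ m ∈ T, β m := h1
    _ ≤ ∑ m ∈ Finset.range T.card, β m := antitone_sum_le' hanti T
    _ ≤ ∑ m ∈ Finset.range T.card, lam m := hdom T.card
    _ = ∑ t ∈ Finset.range S.card, lam t := by rw [hcard]

lemma sortDom_of_feas' {n : ℕ} {α : Fin n → ℕ} {lam : ℕ → ℕ}
    (hF : ∀ S : Finset (Fin n), ∑ t ∈ S, α t ≤ ∑ t ∈ Finset.range S.card, lam t) :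
    SortDominatedBy n α lam := by
  classical
  set σ : Equiv.Perm (Fin n) := Fin.revPerm.trans (Tuple.sort α) with hσdef
  set β : ℕ → ℕ := fun m => if h : m < n then α (σ ⟨m, h⟩) else 0 with hβdef
  have hβval : ∀ (m : ℕ) (h : m < n), β m = α (σ ⟨m, h⟩) := fun m h => dif_pos h
  have hβzero : ∀ m, n ≤ m → β m = 0 := fun m h => dif_neg (by omega)
  have hanti : Antitone β := by
    intro m1 m2 h12
    by_cases h2 : m2 < n
    · have h1 : m1 < n := lt_of_le_of_lt h12 h2
      rw [hβval m1 h1, hβval m2 h2]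
      have hle : (⟨m1, h1⟩ : Fin n) ≤ ⟨m2, h2⟩ := h12
      have hrev : Fin.rev ⟨m2, h2⟩ ≤ Fin.rev ⟨m1, h1⟩ := Fin.rev_le_rev.mpr hle
      have := Tuple.monotone_sort α hrev
      simpa [hσdef] using this
    · rw [hβzero m2 (by omega)]; exact Nat.zero_le _
  have key : ∀ k, k ≤ n → ∑ t ∈ Finset.range k, β t ≤ ∑ t ∈ Finset.range k, lam t := by
    intro k hk
    have h1 : ∑ t ∈ Finset.range k, β t = ∑ m : Fin k, α (σ (Fin.castLE hk m)) := by
      rw [← Fin.sum_univ_eq_sum_range]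
      refine Finset.sum_congr rfl (fun m _ => ?_)
      rw [hβval m (lt_of_lt_of_le m.isLt hk)]
      rfl
    set e : Fin k ↪ Fin n :=
      ⟨fun m => σ (Fin.castLE hk m),
       fun a b hab => Fin.castLE_injective hk (σ.injective hab)⟩ with he
    have h2 : ∑ m : Fin k, α (σ (Fin.castLE hk m)) = ∑ t ∈ Finset.univ.map e, α t := by
      rw [Finset.sum_map]; rfl
    have h3 : (Finset.univ.map e).card = k := by
      rw [Finset.card_map, Finset.card_univ, Fintype.card_fin]
    rw [h1, h2]
    calc ∑ t ∈ Finset.univ.map e, α t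
        ≤ ∑ t ∈ Finset.range (Finset.univ.map e).card, lam t := hF _
      _ = ∑ t ∈ Finset.range k, lam t := by rw [h3]
  refine ⟨β, hanti, hβzero, ⟨σ, fun i => ?_⟩, fun k => ?_⟩
  · rw [hβval i i.isLt]
  · by_cases hk : k ≤ n
    · exact key k hk
    · have hsub : Finset.range n ⊆ Finset.range k := Finset.range_subset_range.mpr (by omega)
      have h0 : ∑ t ∈ Finset.range n, β t = ∑ t ∈ Finset.range k, β t :=
        Finset.sum_subset hsub (fun x _ hx => hβzero x (by
          simp only [Finset.mem_range] at hx; omega))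
      calc ∑ t ∈ Finset.range k, β t = ∑ t ∈ Finset.range n, β t := h0.symm
        _ ≤ ∑ t ∈ Finset.range n, lam t := key n le_rfl
        _ ≤ ∑ t ∈ Finset.range k, lam t := Finset.sum_le_sum_of_subset hsub

lemma lam_concave' {lam : ℕ → ℕ} (hA : Antitone lam) {u a b s : ℕ}
    (hu : u ≤ a) (hab : a ≤ b) (hsum : u + s = a + b) :
    ∑ t ∈ Finset.range u, lam t + ∑ t ∈ Finset.range s, lam t ≤
      ∑ t ∈ Finset.range a, lam t + ∑ t ∈ Finset.range b, lam t := by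
  have hbs : b ≤ s := by omega
  have e1 : ∑ t ∈ Finset.range s, lam t
      = ∑ t ∈ Finset.range b, lam t + ∑ t ∈ Finset.Ico b s, lam t := by
    rw [Finset.range_eq_Ico, Finset.range_eq_Ico,
      ← Finset.sum_Ico_consecutive lam (Nat.zero_le b) hbs]
  have e2 : ∑ t ∈ Finset.range a, lam t
      = ∑ t ∈ Finset.range u, lam t + ∑ t ∈ Finset.Ico u a, lam t := by
    rw [Finset.range_eq_Ico, Finset.range_eq_Ico,
      ← Finset.sum_Ico_consecutive lam (Nat.zero_le u) hu]
  have e3 : ∑ t ∈ Finset.Ico b s, lam t ≤ ∑ t ∈ Finset.Ico u a, lam t := by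
    rw [Finset.sum_Ico_eq_sum_range, Finset.sum_Ico_eq_sum_range]
    have hd : s - b = a - u := by omega
    rw [hd]
    exact Finset.sum_le_sum (fun i _ => hA (by omega))
  omega

/-- for a partition `lam` of `d` and `n ≥ 1`, the set of `α ∈ ℕ^n` with
`|α| = d` and `sort(α) ⊴ lam` is M-convex. -/
theorem MConvex_sort_dominated
    (d n : ℕ) (hn : 1 ≤ n) (lam : ℕ → ℕ) (hlam : IsPartitionOf d lam) :
    MConvex {α : Fin n → ℕ | (∑ i, α i) = d ∧ SortDominatedBy n α lam} := by
  classical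
  obtain ⟨hA, -⟩ := hlam
  intro α hα β hβ i hi
  obtain ⟨hαd, hαs⟩ := hα
  obtain ⟨hβd, hβs⟩ := hβ
  have hFα := feas_of_sortDom' hαs
  have hFβ := feas_of_sortDom' hβs
  set f : Finset (Fin n) → ℕ := fun S => ∑ t ∈ Finset.range S.card, lam t with hf
  set 𝒯 : Finset (Finset (Fin n)) :=
    Finset.univ.filter (fun S => i ∉ S ∧ ∑ t ∈ S, α t = f S) with h𝒯
  set U : Finset (Fin n) := 𝒯.sup id with hU
  -- U is tight
  have hUt : ∑ t ∈ U, α t = f U := by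
    rw [hU]
    refine Finset.sup_induction (p := fun S => ∑ t ∈ S, α t = f S) ?_ ?_ ?_
    · simp [hf]
    · intro S hS T hT
      have h1 : ∑ t ∈ S ∪ T, α t + ∑ t ∈ S ∩ T, α t = ∑ t ∈ S, α t + ∑ t ∈ T, α t :=
        Finset.sum_union_inter
      have hcard : (S ∪ T).card + (S ∩ T).card = S.card + T.card :=
        Finset.card_union_add_card_inter S T
      have h2 : f (S ∪ T) + f (S ∩ T) ≤ f S + f T := by
        rcases le_total S.card T.card with hc | hc
        · have := lam_concave' hA (u := (S ∩ T).card) (a := S.card) (b := T.card)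
            (s := (S ∪ T).card) (Finset.card_le_card Finset.inter_subset_left) hc (by omega)
          simpa [hf, add_comm] using this
        · have := lam_concave' hA (u := (S ∩ T).card) (a := T.card) (b := S.card)
            (s := (S ∪ T).card) (Finset.card_le_card Finset.inter_subset_right) hc (by omega)
          simp only [hf] at this ⊢
          omega
      have h3 : ∑ t ∈ S ∪ T, α t ≤ f (S ∪ T) := hFα _
      have h4 : ∑ t ∈ S ∩ T, α t ≤ f (S ∩ T) := hFα _
      have hgoal : ∑ t ∈ S ∪ T, α t = f (S ∪ T) := by omega
      simpa [Finset.sup_eq_union] using hgoal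
    · intro S hS
      simp only [h𝒯, Finset.mem_filter] at hS
      simpa using hS.2.2
  have hiU : i ∉ U := by
    intro hmem
    rw [hU, Finset.mem_sup] at hmem
    obtain ⟨S, hS, hiS⟩ := hmem
    simp only [h𝒯, Finset.mem_filter] at hS
    exact hS.2.1 hiS
  -- there is j outside U with α j < β j
  have hj : ∃ j : Fin n, j ∉ U ∧ α j < β j := by
    by_contra hcon
    push_neg at hcon
    have hle : ∀ t ∈ Uᶜ, β t ≤ α t := by
      intro t ht
      simp only [Finset.mem_compl] at ht
      exact hcon t ht
    have hstrict : ∑ t ∈ Uᶜ, β t < ∑ t ∈ Uᶜ, α t :=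
      Finset.sum_lt_sum hle ⟨i, Finset.mem_compl.mpr hiU, hi⟩
    have hUβ : ∑ t ∈ U, β t ≤ ∑ t ∈ U, α t := le_of_le_of_eq (hFβ U) hUt.symm
    have hA' : ∑ t ∈ U, α t + ∑ t ∈ Uᶜ, α t = d := by
      rw [Finset.sum_add_sum_compl]; exact hαd
    have hB' : ∑ t ∈ U, β t + ∑ t ∈ Uᶜ, β t = d := by
      rw [Finset.sum_add_sum_compl]; exact hβd
    omega
  obtain ⟨j, hjU, hjβ⟩ := hj
  have hij : i ≠ j := by
    intro h; rw [h] at hi; omega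
  have hαi1 : 1 ≤ α i := by omega
  set γ : Fin n → ℕ := fun t => if t = i then α t - 1 else if t = j then α t + 1 else α t
    with hγ
  have hγkey : ∀ t, γ t + (if t = i then 1 else 0) = α t + (if t = j then 1 else 0) := by
    intro t
    by_cases hti : t = i
    · subst hti
      have htj : t ≠ j := hij
      simp only [hγ, eq_self_iff_true, if_true, if_neg htj]
      omega
    · by_cases htj : t = j
      · subst htj
        simp only [hγ, if_neg hti, eq_self_iff_true, if_true]
      · simp only [hγ, if_neg hti, if_neg htj]
  have hγsum : ∀ S : Finset (Fin n),
      ∑ t ∈ S, γ t + (if i ∈ S then 1 else 0) = ∑ t ∈ S, α t + (if j ∈ S then 1 else 0) := by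
    intro S
    have h := Finset.sum_congr rfl (fun t (_ : t ∈ S) => hγkey t)
    rw [Finset.sum_add_distrib, Finset.sum_add_distrib,
      Finset.sum_ite_eq' S i (fun _ => 1), Finset.sum_ite_eq' S j (fun _ => 1)] at h
    exact h
  have hγd : ∑ t, γ t = d := by
    have h := hγsum Finset.univ
    simp only [Finset.mem_univ, if_pos] at h
    omega
  have hγF : ∀ S : Finset (Fin n), ∑ t ∈ S, γ t ≤ ∑ t ∈ Finset.range S.card, lam t := by
    intro S
    have h := hγsum S
    have hFS : ∑ t ∈ S, α t ≤ f S := hFα S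
    by_cases hiS : i ∈ S
    · simp only [if_pos hiS] at h
      simp only [hf] at hFS
      split_ifs at h <;> omega
    · by_cases hjS : j ∈ S
      · -- S is not tight
        have hnt : ∑ t ∈ S, α t ≠ f S := by
          intro htight
          have hmem : S ∈ 𝒯 := by
            simp only [h𝒯, Finset.mem_filter]
            exact ⟨Finset.mem_univ S, hiS, htight⟩
          have : S ⊆ U := Finset.le_sup (f := id) hmem
          exact hjU (this hjS)
        simp only [if_neg hiS, if_pos hjS] at h
        simp only [hf] at hFS hnt
        omega
      · simp only [if_neg hiS, if_neg hjS] at h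
        simp only [hf] at hFS
        omega
  exact ⟨j, hjβ, hγd, sortDom_of_feas' hγF⟩
end
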